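/- The support of a multiplicative critical datum is contained in a single maximal cone: let Σ be a simplicial fan in N_ℝ and let (c_k)_{k ∈ N ∩ |Σ|} be complex numbers satisfying c_k c_l = c_{k+l} whenever k̄ and l̄ lie in a common cone of Σ, and c_k c_l = 0 whenever k̄ and l̄ do not lie in a common cone. Then the support supp(c) = {k ∈ N ∩ |Σ| : c_k ≠ 0} satisfies: any two elements of supp(c) have images in a common cone of Σ; consequently, if Σ has finitely many cones, supp(c) is contained in N ∩ σ for some single cone σ of Σ. -/

import Mathlib

open scoped BigOperators

/-- Combinatorial data of a (stacky) fan: a finitely generated abelian group `N` with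
its realification map `bar : N → N_ℝ = V`, ray generators `b₁,…,b_m ∈ N`, and a finite
collection of cones, each identified (as in the paper) with the subset of
`{1,…,m}` indexing its rays. -/
structure FanData (N V : Type*) [AddCommGroup N] [AddCommGroup V] [Module ℝ V]
    (m : ℕ) where
  bar : N →+ V
  b : Fin m → N
  cones : Finset (Finset (Fin m))

namespace FanData

variable {N V : Type*} [AddCommGroup N] [AddCommGroup V] [Module ℝ V] {m : ℕ}
variable (F : FanData N V m)

/-- The cone of `V` spanned by the rays indexed by `σ`. -/
def coneSet (σ : Finset (Fin m)) : Set V :=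
  {x | ∃ c : Fin m → ℝ, (∀ i, 0 ≤ c i) ∧ (∀ i, i ∉ σ → c i = 0) ∧
      x = ∑ i, c i • F.bar (F.b i)}

/-- The support `|Σ|` of the fan. -/
def support : Set V := ⋃ σ ∈ F.cones, F.coneSet σ

/-- The set `N ∩ |Σ|` of lattice points of the support. -/
def latticePts : Set N := {k | F.bar k ∈ F.support}

/-- Simpliciality: the rays of each cone are linearly independent. -/
def Simplicial : Prop :=
  ∀ σ ∈ F.cones, LinearIndependent ℝ (fun i : σ => F.bar (F.b (i : Fin m)))

/-- The collection of cones is closed under passing to faces. -/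
def FacesClosed : Prop := ∀ σ ∈ F.cones, ∀ τ, τ ⊆ σ → τ ∈ F.cones

/-- Two cones of the fan meet along a common face. -/
def MeetsInFaces : Prop :=
  ∀ σ ∈ F.cones, ∀ τ ∈ F.cones, ∀ x ∈ F.coneSet σ, x ∈ F.coneSet τ →
    x ∈ F.coneSet (σ ∩ τ)

/-- `Ψ : N ∩ |Σ| → (ℚ_{≥0})^m` records the (unique, by simpliciality) nonnegative
barycentric coordinates of `k̄` on the rays of its minimal cone: `Ψ(k) ≥ 0`,
`k̄ = Σᵢ Ψᵢ(k) b̄ᵢ`, and the support of `Ψ(k)` is contained in every cone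
containing `k̄` (Notation 2.2 of the paper). -/
def IsPsi (Ψ : N → Fin m → ℚ) : Prop :=
  ∀ k ∈ F.latticePts,
    (∀ i, 0 ≤ Ψ k i) ∧
    (F.bar k = ∑ i, (Ψ k i : ℝ) • F.bar (F.b i)) ∧
    (∀ σ ∈ F.cones, F.bar k ∈ F.coneSet σ → ∀ i, Ψ k i ≠ 0 → i ∈ σ)

/-- The subgroup `𝕆 = Σ_{k ∈ N ∩ |Σ|} ℤ·(Ψ(k), k) ⊆ ℚ^m ⊕ N`. -/
def OO (Ψ : N → Fin m → ℚ) : AddSubgroup ((Fin m → ℚ) × N) :=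
  AddSubgroup.closure {p | ∃ k ∈ F.latticePts, p = (Ψ k, k)}

/-- The lattice `Λ = {(λ, 0) ∈ 𝕆} ⊆ ℚ^m` of the refined fan sequence. -/
def Lam (Ψ : N → Fin m → ℚ) : AddSubgroup (Fin m → ℚ) :=
  (F.OO Ψ).comap (AddMonoidHom.inl (Fin m → ℚ) N)

lemma coneSet_mono' {σ τ : Finset (Fin m)} (h : σ ⊆ τ) : F.coneSet σ ⊆ F.coneSet τ := by
  rintro x ⟨a, ha0, has, rfl⟩
  exact ⟨a, ha0, fun i hi => has i (fun h' => hi (h h')), rfl⟩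

lemma add_mem_coneSet' {σ : Finset (Fin m)} {x y : V} (hx : x ∈ F.coneSet σ)
    (hy : y ∈ F.coneSet σ) : x + y ∈ F.coneSet σ := by
  obtain ⟨a, ha0, has, rfl⟩ := hx
  obtain ⟨b, hb0, hbs, rfl⟩ := hy
  refine ⟨fun i => a i + b i, fun i => add_nonneg (ha0 i) (hb0 i),
    fun i hi => by show a i + b i = 0; rw [has i hi, hbs i hi, add_zero], ?_⟩
  rw [← Finset.sum_add_distrib]
  simp [add_smul]

lemma coneSet_subset_support' {σ : Finset (Fin m)} (h : σ ∈ F.cones) :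
    F.coneSet σ ⊆ F.support := fun x hx => Set.mem_biUnion h hx

lemma split_lemma' (hsimp : F.Simplicial) (hmeet : F.MeetsInFaces)
    {σ τ : Finset (Fin m)} (hσ : σ ∈ F.cones) (hτ : τ ∈ F.cones)
    {x y : V} (hx : x ∈ F.coneSet σ) (hy : y ∈ F.coneSet σ)
    (hxy : x + y ∈ F.coneSet τ) :
    x ∈ F.coneSet (σ ∩ τ) ∧ y ∈ F.coneSet (σ ∩ τ) := by
  have hsum : x + y ∈ F.coneSet (σ ∩ τ) :=
    hmeet σ hσ τ hτ _ (F.add_mem_coneSet' hx hy) hxy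
  obtain ⟨a, ha0, has, rfl⟩ := hx
  obtain ⟨b, hb0, hbs, rfl⟩ := hy
  obtain ⟨d, hd0, hds, hdeq⟩ := hsum
  have hli := hsimp σ hσ
  rw [Fintype.linearIndependent_iff] at hli
  -- the coefficient function
  set g : Fin m → ℝ := fun i => a i + b i - d i with hg
  have hgz : ∀ i, i ∉ σ → g i = 0 := by
    intro i hi
    have hd : d i = 0 := hds i (fun h => hi (Finset.mem_inter.mp h).1)
    simp [hg, has i hi, hbs i hi, hd]
  have h0 : ∑ i : Fin m, g i • F.bar (F.b i) = 0 := by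
    have : ∑ i : Fin m, g i • F.bar (F.b i) =
        (∑ i, a i • F.bar (F.b i) + ∑ i, b i • F.bar (F.b i)) -
          ∑ i, d i • F.bar (F.b i) := by
      rw [← Finset.sum_add_distrib, ← Finset.sum_sub_distrib]
      simp [hg, add_smul, sub_smul]
    rw [this, ← hdeq, sub_self]
  have h0' : ∑ i : σ, g (i : Fin m) • F.bar (F.b (i : Fin m)) = 0 := by
    rw [Finset.sum_coe_sort σ (fun i => g i • F.bar (F.b i))]
    rw [← h0]
    exact Finset.sum_subset (Finset.subset_univ σ)
      (fun i _ hi => by rw [hgz i hi, zero_smul])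
  have hgσ : ∀ i : σ, g (i : Fin m) = 0 := hli (fun i => g (i : Fin m)) h0'
  have hzero : ∀ i, i ∉ σ ∩ τ → a i = 0 ∧ b i = 0 := by
    intro i hi
    by_cases hiσ : i ∈ σ
    · have hd : d i = 0 := hds i hi
      have := hgσ ⟨i, hiσ⟩
      simp only [hg] at this
      have hab : a i + b i = 0 := by
        have : a i + b i - d i = 0 := this
        rw [hd, sub_zero] at this; exact this
      constructor
      · linarith [ha0 i, hb0 i]
      · linarith [ha0 i, hb0 i]
    · exact ⟨has i hiσ, hbs i hiσ⟩
  exact ⟨⟨a, ha0, fun i hi => (hzero i hi).1, rfl⟩,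
    ⟨b, hb0, fun i hi => (hzero i hi).2, rfl⟩⟩

lemma key_list' (hsimp : F.Simplicial) (hmeet : F.MeetsInFaces)
    (S : Set N)
    (hpair : ∀ k ∈ S, ∀ l ∈ S, ∃ σ ∈ F.cones, F.bar k ∈ F.coneSet σ ∧ F.bar l ∈ F.coneSet σ)
    (hadd : ∀ k ∈ S, ∀ l ∈ S, k + l ∈ S) :
    ∀ L : List N, (∀ k ∈ L, k ∈ S) → L ≠ [] →
      L.sum ∈ S ∧ ∀ τ ∈ F.cones, F.bar L.sum ∈ F.coneSet τ →
        ∀ k ∈ L, F.bar k ∈ F.coneSet τ := by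
  intro L
  induction L with
  | nil => intro _ h; exact absurd rfl h
  | cons a L ih =>
    intro hmem _
    have haS : a ∈ S := hmem a (List.mem_cons_self (a := a) (l := L))
    by_cases hL : L = []
    · subst hL
      refine ⟨by simpa using haS, ?_⟩
      intro τ hτ hbar k hk
      rcases List.mem_singleton.mp hk with rfl
      simpa using hbar
    · have ihL := ih (fun k hk => hmem k (List.mem_cons_of_mem _ hk)) hL
      have hsumS := ihL.1
      obtain ⟨σ, hσ, haσ, hsσ⟩ := hpair a haS L.sum hsumS
      constructor
      · simpa [List.sum_cons] using hadd a haS L.sum hsumS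
      · intro τ hτ hbar k hk
        have hbar' : F.bar a + F.bar L.sum ∈ F.coneSet τ := by
          simpa [List.sum_cons, map_add] using hbar
        obtain ⟨h1, h2⟩ := F.split_lemma' hsimp hmeet hσ hτ haσ hsσ hbar'
        rcases List.mem_cons.mp hk with rfl | hk'
        · exact F.coneSet_mono' Finset.inter_subset_right h1
        · exact ihL.2 τ hτ (F.coneSet_mono' Finset.inter_subset_right h2) k hk'

end FanData

/-- The support of a multiplicative critical datum is contained in a single maximal
cone: if `(c_k)_{k ∈ N ∩ |Σ|}` satisfies `c_k c_l = c_{k+l}` whenever `k̄, l̄` lie in a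
common cone of `Σ` and `c_k c_l = 0` otherwise, then any two elements of the support
`{k : c_k ≠ 0}` have images in a common cone; consequently (`Σ` having finitely many
cones) the support is contained in `N ∩ σ` for a single cone `σ` of `Σ`. -/
theorem FanData.crit_support_in_single_cone
    {N V : Type*} [AddCommGroup N] [AddCommGroup V] [Module ℝ V] {m : ℕ}
    (F : FanData N V m) (hsimp : F.Simplicial) (hfaces : F.FacesClosed)
    (hmeet : F.MeetsInFaces) (hconv : Convex ℝ F.support)
    (hbot : (∅ : Finset (Fin m)) ∈ F.cones)
    (c : N → ℂ)
    (hmul : ∀ k ∈ F.latticePts, ∀ l ∈ F.latticePts,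
      ((∃ σ ∈ F.cones, F.bar k ∈ F.coneSet σ ∧ F.bar l ∈ F.coneSet σ) →
          c k * c l = c (k + l)) ∧
      (¬ (∃ σ ∈ F.cones, F.bar k ∈ F.coneSet σ ∧ F.bar l ∈ F.coneSet σ) →
          c k * c l = 0)) :
    (∀ k ∈ F.latticePts, ∀ l ∈ F.latticePts, c k ≠ 0 → c l ≠ 0 →
        ∃ σ ∈ F.cones, F.bar k ∈ F.coneSet σ ∧ F.bar l ∈ F.coneSet σ) ∧
    (∃ σ ∈ F.cones, ∀ k ∈ F.latticePts, c k ≠ 0 → F.bar k ∈ F.coneSet σ) := by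
  classical
  have part1 : ∀ k ∈ F.latticePts, ∀ l ∈ F.latticePts, c k ≠ 0 → c l ≠ 0 →
      ∃ σ ∈ F.cones, F.bar k ∈ F.coneSet σ ∧ F.bar l ∈ F.coneSet σ := by
    intro k hk l hl hck hcl
    by_contra h
    exact mul_ne_zero hck hcl ((hmul k hk l hl).2 h)
  refine ⟨part1, ?_⟩
  set S : Set N := {k | k ∈ F.latticePts ∧ c k ≠ 0} with hSdef
  have hpair : ∀ k ∈ S, ∀ l ∈ S,
      ∃ σ ∈ F.cones, F.bar k ∈ F.coneSet σ ∧ F.bar l ∈ F.coneSet σ :=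
    fun k hk l hl => part1 k hk.1 l hl.1 hk.2 hl.2
  have hadd : ∀ k ∈ S, ∀ l ∈ S, k + l ∈ S := by
    intro k hk l hl
    obtain ⟨σ, hσ, h1, h2⟩ := hpair k hk l hl
    have hkl : k + l ∈ F.latticePts := by
      have hmem : F.bar (k + l) ∈ F.coneSet σ := by
        rw [map_add]; exact F.add_mem_coneSet' h1 h2
      exact F.coneSet_subset_support' hσ hmem
    refine ⟨hkl, ?_⟩
    have heq := (hmul k hk.1 l hl.1).1 ⟨σ, hσ, h1, h2⟩
    rw [← heq]
    exact mul_ne_zero hk.2 hl.2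
  by_cases hne : S.Nonempty
  · by_contra hcon
    push_neg at hcon
    -- choose a bad element for each cone
    have hchoice : ∀ σ : {x // x ∈ F.cones}, ∃ k, k ∈ S ∧ F.bar k ∉ F.coneSet σ.1 := by
      rintro ⟨σ, hσ⟩
      obtain ⟨k, hk, hck, hkσ⟩ := hcon σ hσ
      exact ⟨k, ⟨hk, hck⟩, hkσ⟩
    choose f hfS hfbad using hchoice
    set L : List N := F.cones.attach.toList.map f with hLdef
    have hLmem : ∀ k ∈ L, k ∈ S := by
      intro k hk
      obtain ⟨σ, _, rfl⟩ := List.mem_map.mp hk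
      exact hfS σ
    have hLne : L ≠ [] := by
      have : (⟨∅, hbot⟩ : {x // x ∈ F.cones}) ∈ F.cones.attach.toList := by
        simp [Finset.mem_toList]
      intro h
      have : f ⟨∅, hbot⟩ ∈ L := List.mem_map.mpr ⟨_, this, rfl⟩
      simp [h] at this
    obtain ⟨hsumS, hkey⟩ := F.key_list' hsimp hmeet S hpair hadd L hLmem hLne
    have hsupp : F.bar L.sum ∈ F.support := hsumS.1
    obtain ⟨Uσ, hUσ⟩ := Set.mem_iUnion.mp hsupp
    obtain ⟨hUτ, hbarτ⟩ := Set.mem_iUnion.mp hUσ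
    have hfmem : f ⟨Uσ, hUτ⟩ ∈ L := by
      refine List.mem_map.mpr ⟨⟨Uσ, hUτ⟩, ?_, rfl⟩
      simp [Finset.mem_toList]
    exact hfbad ⟨Uσ, hUτ⟩ (hkey Uσ hUτ hbarτ _ hfmem)
  · refine ⟨∅, hbot, fun k hk hc => ?_⟩
    exact absurd ⟨k, hk, hc⟩ hne
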